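/- Let U ⊆ ℂ be open, let P : U → ℂ be holomorphic, and let u, σ : U → ℝ be twice continuously differentiable functions satisfying Δu = 4·(e^{2u} − e^{−2u}·|P|²) and Δσ = 4·e^{2σ} on U. If the function u − σ attains its infimum over U at some point of U, then u ≥ σ everywhere on U. -/

import Mathlib

/-- Directional derivative of `f : ℂ → E` at `z` in the direction `v ∈ ℂ`. -/
noncomputable def dirDeriv {E : Type*} [NormedAddCommGroup E] [NormedSpace ℝ E]
    (v : ℂ) (f : ℂ → E) (z : ℂ) : E :=
  deriv (fun t : ℝ => f (z + t • v)) 0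

/-- The flat Laplacian `Δf = ∂²f/∂x² + ∂²f/∂y²` of a function on `ℂ ≅ ℝ²`
(applied componentwise when the target is `ℂ`). -/
noncomputable def flatLaplacian {E : Type*} [NormedAddCommGroup E] [NormedSpace ℝ E]
    (f : ℂ → E) (z : ℂ) : E :=
  dirDeriv 1 (dirDeriv 1 f) z + dirDeriv Complex.I (dirDeriv Complex.I f) z

/-- Second directional derivative as a 1D second derivative along the line. -/
lemma dirDeriv_dirDeriv {E : Type*} [NormedAddCommGroup E] [NormedSpace ℝ E]
    (v : ℂ) (f : ℂ → E) (z : ℂ) :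
    dirDeriv v (dirDeriv v f) z = deriv (deriv (fun t : ℝ => f (z + t • v))) 0 := by
  unfold dirDeriv
  congr 1
  funext t
  have h1 : (fun s : ℝ => f (z + t • v + s • v)) = fun s : ℝ => f (z + (t + s) • v) := by
    funext s
    rw [add_smul, add_assoc]
  rw [h1]
  have := deriv_comp_const_add (fun t : ℝ => f (z + t • v)) t 0
  simpa using this

/-- At an interior minimum of a C² function on an open set, the second derivative is ≥ 0. -/
lemma second_deriv_nonneg_of_min {g : ℝ → ℝ} {s : Set ℝ} (hs : IsOpen s) (h0 : (0:ℝ) ∈ s)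
    (hg : ContDiffOn ℝ 2 g s) (hmin : ∀ t ∈ s, g 0 ≤ g t) :
    0 ≤ deriv (deriv g) 0 := by
  by_contra hcon
  push_neg at hcon
  have hg' : ContDiffOn ℝ 1 (deriv g) s := by
    have : (1 : WithTop ℕ∞) + 1 ≤ 2 := by norm_num
    exact hg.deriv_of_isOpen hs this
  have hg'' : ContinuousOn (deriv (deriv g)) s :=
    hg'.continuousOn_deriv_of_isOpen hs le_rfl
  have hev : ∀ᶠ t in nhds (0:ℝ), t ∈ s ∧ deriv (deriv g) t < 0 := by
    have hcont : ContinuousAt (deriv (deriv g)) 0 :=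
      hg''.continuousAt (hs.mem_nhds h0)
    have h1 : ∀ᶠ t in nhds (0:ℝ), deriv (deriv g) t < 0 :=
      hcont.eventually_lt continuousAt_const hcon
    filter_upwards [hs.eventually_mem h0, h1] with t ht1 ht2 using ⟨ht1, ht2⟩
  obtain ⟨ε, hε, hball⟩ := Metric.eventually_nhds_iff.1 hev
  have hIsub : Set.Ioo (-ε) ε ⊆ {t | t ∈ s ∧ deriv (deriv g) t < 0} := by
    intro t ht
    apply hball
    rw [Real.dist_eq, sub_zero, abs_lt]
    exact ⟨ht.1, ht.2⟩
  -- deriv g is strictly antitone on Ioo (-ε) ε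
  have hanti : StrictAntiOn (deriv g) (Set.Ioo (-ε) ε) := by
    apply strictAntiOn_of_deriv_neg (convex_Ioo _ _)
    · exact (hg'.continuousOn).mono (fun t ht => (hIsub ht).1)
    · intro t ht
      rw [interior_Ioo] at ht
      exact (hIsub ht).2
  have hlm : IsLocalMin g 0 := by
    filter_upwards [hs.eventually_mem h0] with t ht using hmin t ht
  have hd0 : deriv g 0 = 0 := hlm.deriv_eq_zero
  have hmem0 : (0:ℝ) ∈ Set.Ioo (-ε) ε := by constructor <;> linarith
  -- deriv g < 0 on (0, ε)
  have hneg : ∀ t ∈ Set.Ioo (0:ℝ) ε, deriv g t < 0 := by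
    intro t ht
    have : deriv g t < deriv g 0 := hanti hmem0 ⟨by linarith [ht.1], ht.2⟩ ht.1
    -- careful: StrictAntiOn: a ∈ s → b ∈ s → a < b → f b < f a
    linarith [hd0]
  have hanti2 : StrictAntiOn g (Set.Icc 0 (ε/2)) := by
    apply strictAntiOn_of_deriv_neg (convex_Icc _ _)
    · apply hg.continuousOn.mono
      intro t ht
      have : t ∈ Set.Ioo (-ε) ε := by
        constructor <;> [linarith [ht.1]; linarith [ht.2]]
      exact (hIsub this).1
    · intro t ht
      rw [interior_Icc] at ht
      exact hneg t ⟨ht.1, by linarith [ht.2]⟩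
  have h1 : g (ε/2) < g 0 := by
    apply hanti2 ⟨le_refl 0, by linarith⟩ ⟨by linarith, le_refl _⟩ (by linarith)
  have h2 : g 0 ≤ g (ε/2) := by
    apply hmin
    have : (ε/2 : ℝ) ∈ Set.Ioo (-ε) ε := by constructor <;> linarith
    exact (hIsub this).1
  linarith

/-- Lemma 6.1, first part: if `Δu = 4(e^{2u} − e^{−2u}|P|²)` and
`Δσ = 4e^{2σ}` on an open set `U`, with `P` holomorphic, and `u − σ` attains its
infimum over `U` at a point of `U`, then `u ≥ σ` on `U`. -/
theorem statement6 (U : Set ℂ) (hU : IsOpen U)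
    (P : ℂ → ℂ) (hP : DifferentiableOn ℂ P U)
    (u σ : ℂ → ℝ) (hu : ContDiffOn ℝ 2 u U) (hσ : ContDiffOn ℝ 2 σ U)
    (hu_eq : ∀ z ∈ U, flatLaplacian u z
      = 4 * (Real.exp (2 * u z) - Real.exp (-(2 * u z)) * ‖P z‖ ^ 2))
    (hσ_eq : ∀ z ∈ U, flatLaplacian σ z = 4 * Real.exp (2 * σ z))
    (hmin : ∃ z₀ ∈ U, ∀ z ∈ U, u z₀ - σ z₀ ≤ u z - σ z) :
    ∀ z ∈ U, σ z ≤ u z := by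
  obtain ⟨z₀, hz₀, hm⟩ := hmin
  -- key claim: for each direction v, the phrase below
  have key : ∀ v : ℂ,
      dirDeriv v (dirDeriv v σ) z₀ ≤ dirDeriv v (dirDeriv v u) z₀ := by
    intro v
    set L : ℝ → ℂ := fun t => z₀ + t • v with hL
    have hLc : ContDiff ℝ 2 L := by
      apply contDiff_const.add
      exact contDiff_id.smul contDiff_const
    set s : Set ℝ := L ⁻¹' U with hsdef
    have hs : IsOpen s := hU.preimage hLc.continuous
    have h0 : (0:ℝ) ∈ s := by
      simp [hsdef, hL, hz₀]
    have hmaps : Set.MapsTo L s U := fun t ht => ht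
    have hgu : ContDiffOn ℝ 2 (fun t => u (L t)) s := hu.comp hLc.contDiffOn hmaps
    have hgσ : ContDiffOn ℝ 2 (fun t => σ (L t)) s := hσ.comp hLc.contDiffOn hmaps
    have hg : ContDiffOn ℝ 2 (fun t => u (L t) - σ (L t)) s := hgu.sub hgσ
    have hmin' : ∀ t ∈ s, u (L 0) - σ (L 0) ≤ u (L t) - σ (L t) := by
      intro t ht
      have h0L : L 0 = z₀ := by simp [hL]
      rw [h0L]
      exact hm (L t) ht
    have h2 : 0 ≤ deriv (deriv (fun t => u (L t) - σ (L t))) 0 :=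
      second_deriv_nonneg_of_min hs h0 hg hmin'
    -- split the second derivative
    have hone : (1 : WithTop ℕ∞) + 1 ≤ 2 := by norm_num
    have hgu' : ContDiffOn ℝ 1 (deriv (fun t => u (L t))) s := hgu.deriv_of_isOpen hs hone
    have hgσ' : ContDiffOn ℝ 1 (deriv (fun t => σ (L t))) s := hgσ.deriv_of_isOpen hs hone
    have heq : ∀ᶠ t in nhds (0:ℝ), deriv (fun t => u (L t) - σ (L t)) t
        = deriv (fun t => u (L t)) t - deriv (fun t => σ (L t)) t := by
      filter_upwards [hs.eventually_mem h0] with t ht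
      have hdu : DifferentiableAt ℝ (fun t => u (L t)) t :=
        (hgu.contDiffAt (hs.mem_nhds ht)).differentiableAt (by norm_num)
      have hdσ : DifferentiableAt ℝ (fun t => σ (L t)) t :=
        (hgσ.contDiffAt (hs.mem_nhds ht)).differentiableAt (by norm_num)
      exact deriv_sub hdu hdσ
    have heq2 : deriv (deriv (fun t => u (L t) - σ (L t))) 0
        = deriv (fun t => deriv (fun t => u (L t)) t - deriv (fun t => σ (L t)) t) 0 :=
      Filter.EventuallyEq.deriv_eq heq
    have hdu0 : DifferentiableAt ℝ (deriv (fun t => u (L t))) 0 :=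
      (hgu'.contDiffAt (hs.mem_nhds h0)).differentiableAt one_ne_zero
    have hdσ0 : DifferentiableAt ℝ (deriv (fun t => σ (L t))) 0 :=
      (hgσ'.contDiffAt (hs.mem_nhds h0)).differentiableAt one_ne_zero
    have heq3 : deriv (fun t => deriv (fun t => u (L t)) t - deriv (fun t => σ (L t)) t) 0
        = deriv (deriv (fun t => u (L t))) 0 - deriv (deriv (fun t => σ (L t))) 0 :=
      deriv_fun_sub hdu0 hdσ0
    rw [heq2, heq3] at h2
    rw [dirDeriv_dirDeriv v u z₀, dirDeriv_dirDeriv v σ z₀]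
    have hLu : (fun t : ℝ => u (z₀ + t • v)) = fun t => u (L t) := rfl
    have hLσ : (fun t : ℝ => σ (z₀ + t • v)) = fun t => σ (L t) := rfl
    rw [hLu, hLσ]
    linarith
  have hlap : flatLaplacian σ z₀ ≤ flatLaplacian u z₀ := by
    unfold flatLaplacian
    have h1 := key 1
    have h2 := key Complex.I
    linarith
  rw [hu_eq z₀ hz₀, hσ_eq z₀ hz₀] at hlap
  have hp : (0:ℝ) ≤ Real.exp (-(2 * u z₀)) * ‖P z₀‖ ^ 2 :=
    mul_nonneg (Real.exp_pos _).le (sq_nonneg _)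
  have hexp : Real.exp (2 * σ z₀) ≤ Real.exp (2 * u z₀) := by linarith
  have hz₀le : σ z₀ ≤ u z₀ := by
    have := Real.exp_le_exp.1 hexp
    linarith
  intro z hz
  have := hm z hz
  linarith
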